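/- Let ρ > 0, 0 < h < 1/ρ, β_h = 1 - ρh, θ_h = -log(1-ρh)/(ρh), and M ≥ 0. If b : [0,∞) → ℝ satisfies |b(t)| ≤ M for all t, then ∫₀^∞ |b(t)| · |e^{-ρt} - e^{-ρ θ_h ⌊t/h⌋ h}| dt ≤ M ρ e^{θ_h ρ h} ∫₀^∞ e^{-ρt}((θ_h-1)t + θ_h h) dt = M e^{θ_h ρ h}((θ_h-1)/ρ + θ_h h), and consequently this quantity is ≤ C h for some constant C and all sufficiently small h. -/

import Mathlib

open Real MeasureTheory

private lemma exp_aff_integral (ρ A B : ℝ) (hρ : 0 < ρ) (hA : 0 ≤ A) (hB : 0 ≤ B) :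
    IntegrableOn (fun t => Real.exp (-ρ*t) * (A*t + B)) (Set.Ioi 0) ∧
    ∫ t in Set.Ioi (0:ℝ), Real.exp (-ρ*t) * (A*t + B) = A/ρ^2 + B/ρ := by
  set g : ℝ → ℝ := fun t => -(A/ρ*t + (A/ρ^2 + B/ρ)) * Real.exp (-ρ*t) with hg
  have hderiv : ∀ t : ℝ, HasDerivAt g (Real.exp (-ρ*t) * (A*t + B)) t := by
    intro t
    have h1 : HasDerivAt (fun t : ℝ => -(A/ρ*t + (A/ρ^2 + B/ρ))) (-(A/ρ)) t := by
      have h0 : HasDerivAt (fun x : ℝ => -(A/ρ*x + (A/ρ^2 + B/ρ))) (-(A/ρ * 1)) t :=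
        (((hasDerivAt_id t).const_mul (A/ρ)).add_const (A/ρ^2 + B/ρ)).neg
      rw [mul_one] at h0
      exact h0
    have h2 : HasDerivAt (fun t : ℝ => Real.exp (-ρ*t)) (Real.exp (-ρ*t) * (-ρ)) t := by
      simpa using ((hasDerivAt_id t).const_mul (-ρ)).exp
    have := h1.mul h2
    refine this.congr_deriv ?_
    have hρ0 : ρ ≠ 0 := hρ.ne'
    field_simp
    ring
  have hpos : ∀ t ∈ Set.Ioi (0:ℝ), 0 ≤ Real.exp (-ρ*t) * (A*t + B) := by
    intro t ht
    have : (0:ℝ) < t := ht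
    positivity
  have htend : Filter.Tendsto g Filter.atTop (nhds 0) := by
    have h1 : Filter.Tendsto (fun t : ℝ => t * Real.exp (-ρ*t)) Filter.atTop (nhds 0) := by
      have hcomp : Filter.Tendsto (fun t : ℝ => (ρ*t) ^ 1 * Real.exp (-(ρ*t)))
          Filter.atTop (nhds 0) :=
        (Real.tendsto_pow_mul_exp_neg_atTop_nhds_zero 1).comp
          (Filter.Tendsto.const_mul_atTop hρ Filter.tendsto_id)
      have := hcomp.const_mul (1/ρ)
      simp only [mul_zero] at this
      refine this.congr fun t => ?_
      rw [pow_one]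
      field_simp
    have h2 : Filter.Tendsto (fun t : ℝ => Real.exp (-ρ*t)) Filter.atTop (nhds 0) := by
      have : Filter.Tendsto (fun t : ℝ => -ρ*t) Filter.atTop Filter.atBot := by
        apply Filter.Tendsto.const_mul_atTop_of_neg (by linarith) Filter.tendsto_id
      exact Real.tendsto_exp_atBot.comp this
    have := ((h1.const_mul (-(A/ρ))).add (h2.const_mul (-(A/ρ^2 + B/ρ))))
    simp only [mul_zero, add_zero] at this
    refine this.congr fun t => ?_
    simp only [hg]
    ring
  have hcont : ContinuousWithinAt g (Set.Ici 0) 0 :=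
    ((hderiv 0).continuousAt).continuousWithinAt
  constructor
  · exact integrableOn_Ioi_deriv_of_nonneg hcont (fun t _ => hderiv t) hpos htend
  · have := integral_Ioi_of_hasDerivAt_of_nonneg hcont (fun t _ => hderiv t) hpos htend
    rw [this]
    simp only [hg]
    norm_num

private lemma abs_exp_sub_exp_le (a b : ℝ) :
    |Real.exp a - Real.exp b| ≤ Real.exp (max a b) * |a - b| := by
  wlog hab : b ≤ a generalizing a b
  · rw [abs_sub_comm, max_comm, abs_sub_comm a]
    exact this b a (le_of_not_ge hab)
  rw [abs_of_nonneg (sub_nonneg.2 (Real.exp_le_exp.2 hab)),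
    abs_of_nonneg (sub_nonneg.2 hab), max_eq_left hab]
  have e1 : Real.exp b = Real.exp a * Real.exp (b - a) := by
    rw [← Real.exp_add]; ring_nf
  nlinarith [Real.add_one_le_exp (b - a), Real.exp_pos a]

set_option maxHeartbeats 1600000 in
private lemma main_aux (ρ M : ℝ) (hρ : 0 < ρ) (hM : 0 ≤ M)
    (b : ℝ → ℝ) (hbdd : ∀ t : ℝ, |b t| ≤ M) (h : ℝ) (hh : 0 < h) (hh2 : h < 1 / ρ) :
      (∫ t in Set.Ioi (0:ℝ), |b t| *
          |Real.exp (-ρ * t) -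
            Real.exp (-ρ * (-Real.log (1 - ρ * h) / (ρ * h)) * (⌊t / h⌋₊ : ℝ) * h)| ≤
        M * ρ * Real.exp ((-Real.log (1 - ρ * h) / (ρ * h)) * ρ * h) *
          ∫ t in Set.Ioi (0:ℝ), Real.exp (-ρ * t) *
            ((-Real.log (1 - ρ * h) / (ρ * h) - 1) * t
              + (-Real.log (1 - ρ * h) / (ρ * h)) * h)) ∧
      M * ρ * Real.exp ((-Real.log (1 - ρ * h) / (ρ * h)) * ρ * h) *
          (∫ t in Set.Ioi (0:ℝ), Real.exp (-ρ * t) *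
            ((-Real.log (1 - ρ * h) / (ρ * h) - 1) * t
              + (-Real.log (1 - ρ * h) / (ρ * h)) * h)) =
        M * Real.exp ((-Real.log (1 - ρ * h) / (ρ * h)) * ρ * h) *
          ((-Real.log (1 - ρ * h) / (ρ * h) - 1) / ρ
            + (-Real.log (1 - ρ * h) / (ρ * h)) * h) := by
  set θ : ℝ := -Real.log (1 - ρ * h) / (ρ * h) with hθ
  clear_value θ
  have hx : 0 < ρ * h := by positivity
  have hx1 : ρ * h < 1 := by
    have := (lt_div_iff₀ hρ).mp hh2
    linarith [this]
  have hlog : Real.log (1 - ρ * h) ≤ -(ρ * h) := by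
    have := Real.log_le_sub_one_of_pos (x := 1 - ρ * h) (by linarith)
    linarith
  have hθ1 : 1 ≤ θ := by
    rw [hθ, le_div_iff₀ hx]
    linarith
  have hθ0 : 0 < θ := lt_of_lt_of_le one_pos hθ1
  set A : ℝ := θ - 1 with hA
  clear_value A
  set B : ℝ := θ * h with hB
  clear_value B
  have hA0 : 0 ≤ A := by linarith
  have hB0 : 0 ≤ B := by rw [hB]; positivity
  set E : ℝ := Real.exp (θ * ρ * h) with hE
  clear_value E
  have hE0 : 0 < E := by rw [hE]; exact Real.exp_pos _
  obtain ⟨hint, hval⟩ := exp_aff_integral ρ A B hρ hA0 hB0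
  have key : ∀ t : ℝ, 0 < t →
      |b t| * |Real.exp (-ρ * t) - Real.exp (-ρ * θ * (⌊t / h⌋₊ : ℝ) * h)| ≤
        M * ρ * E * (Real.exp (-ρ * t) * (A * t + B)) := by
    intro t ht
    set r : ℝ := (⌊t / h⌋₊ : ℝ) with hr
    have hr0 : 0 ≤ r := Nat.cast_nonneg _
    have hfl : r ≤ t / h := Nat.floor_le (div_nonneg ht.le hh.le)
    have hfl2 : t / h < r + 1 := Nat.lt_floor_add_one (t / h)
    clear_value r
    have hn1 : r * h ≤ t := by
      have h0 : r ≤ t / h := hfl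
      calc r * h ≤ (t / h) * h := mul_le_mul_of_nonneg_right h0 hh.le
        _ = t := by field_simp
    have hn2 : t < (r + 1) * h := by
      have h0 : t / h < r + 1 := hfl2
      calc t = (t / h) * h := by field_simp
        _ < (r + 1) * h := mul_lt_mul_of_pos_right h0 hh
    have habs : |Real.exp (-ρ * t) - Real.exp (-ρ * θ * r * h)| ≤
        Real.exp (θ * ρ * h - ρ * t) * (ρ * (A * t + B)) := by
      refine le_trans (abs_exp_sub_exp_le _ _) ?_
      have hmax : max (-ρ * t) (-ρ * θ * r * h) ≤ θ * ρ * h - ρ * t := by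
        apply max_le
        · nlinarith [mul_nonneg (mul_nonneg hθ0.le hρ.le) hh.le]
        · nlinarith [mul_lt_mul_of_pos_left hn2 hρ,
            mul_nonneg (sub_nonneg.2 hθ1)
              (mul_nonneg hρ.le (mul_nonneg (by linarith : (0:ℝ) ≤ r + 1) hh.le))]
      have habs2 : |(-ρ * t) - (-ρ * θ * r * h)| ≤ ρ * (A * t + B) := by
        rw [abs_le]
        constructor
        · have h1 : r * h ≤ θ * (r * h) := by
            nlinarith [mul_nonneg (sub_nonneg.2 hθ1) (mul_nonneg hr0 hh.le)]
          have h2 : t - r * h < h := by nlinarith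
          simp only [hA, hB]
          nlinarith [mul_lt_mul_of_pos_left h2 hρ, mul_le_mul_of_nonneg_left h1 hρ.le,
            mul_nonneg (mul_nonneg hρ.le (sub_nonneg.2 hθ1)) ht.le,
            mul_nonneg (mul_nonneg hρ.le (sub_nonneg.2 hθ1)) hh.le]
        · have h1 : θ * (r * h) ≤ θ * t := mul_le_mul_of_nonneg_left hn1 hθ0.le
          simp only [hA, hB]
          nlinarith [mul_le_mul_of_nonneg_left h1 hρ.le,
            mul_nonneg (mul_nonneg hρ.le hθ0.le) hh.le]
      have e1 : Real.exp (max (-ρ * t) (-ρ * θ * r * h)) ≤ Real.exp (θ * ρ * h - ρ * t) :=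
        Real.exp_le_exp.2 hmax
      exact mul_le_mul e1 habs2 (abs_nonneg _) (Real.exp_pos _).le
    calc |b t| * |Real.exp (-ρ * t) - Real.exp (-ρ * θ * r * h)|
        ≤ M * (Real.exp (θ * ρ * h - ρ * t) * (ρ * (A * t + B))) := by
          apply mul_le_mul (hbdd t) habs (abs_nonneg _) hM
      _ = M * ρ * E * (Real.exp (-ρ * t) * (A * t + B)) := by
          rw [show θ * ρ * h - ρ * t = θ * ρ * h + -ρ * t by ring, Real.exp_add, ← hE]
          ring
  constructor
  · rw [show M * ρ * E * ∫ t in Set.Ioi (0:ℝ), Real.exp (-ρ * t) * (A * t + B)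
        = ∫ t in Set.Ioi (0:ℝ), M * ρ * E * (Real.exp (-ρ * t) * (A * t + B)) from
        (integral_const_mul _ _).symm]
    apply integral_mono_of_nonneg
    · exact Filter.Eventually.of_forall fun t => mul_nonneg (abs_nonneg _) (abs_nonneg _)
    · exact (hint.const_mul _)
    · rw [Filter.EventuallyLE, ae_restrict_iff' measurableSet_Ioi]
      exact Filter.Eventually.of_forall fun t ht => key t ht
  · rw [hval]
    have hρ' : ρ ≠ 0 := ne_of_gt hρ
    field_simp

theorem discounting_error_integral (ρ M : ℝ) (hρ : 0 < ρ) (hM : 0 ≤ M)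
    (b : ℝ → ℝ) (hmeas : Measurable b) (hbdd : ∀ t : ℝ, |b t| ≤ M) :
    (∀ h : ℝ, 0 < h → h < 1 / ρ →
      (∫ t in Set.Ioi (0:ℝ), |b t| *
          |Real.exp (-ρ * t) -
            Real.exp (-ρ * (-Real.log (1 - ρ * h) / (ρ * h)) * (⌊t / h⌋₊ : ℝ) * h)| ≤
        M * ρ * Real.exp ((-Real.log (1 - ρ * h) / (ρ * h)) * ρ * h) *
          ∫ t in Set.Ioi (0:ℝ), Real.exp (-ρ * t) *
            ((-Real.log (1 - ρ * h) / (ρ * h) - 1) * t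
              + (-Real.log (1 - ρ * h) / (ρ * h)) * h)) ∧
      M * ρ * Real.exp ((-Real.log (1 - ρ * h) / (ρ * h)) * ρ * h) *
          (∫ t in Set.Ioi (0:ℝ), Real.exp (-ρ * t) *
            ((-Real.log (1 - ρ * h) / (ρ * h) - 1) * t
              + (-Real.log (1 - ρ * h) / (ρ * h)) * h)) =
        M * Real.exp ((-Real.log (1 - ρ * h) / (ρ * h)) * ρ * h) *
          ((-Real.log (1 - ρ * h) / (ρ * h) - 1) / ρ
            + (-Real.log (1 - ρ * h) / (ρ * h)) * h)) ∧
    (∃ C : ℝ, ∃ h₀ > (0:ℝ), ∀ h : ℝ, 0 < h → h ≤ h₀ →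
      (∫ t in Set.Ioi (0:ℝ), |b t| *
          |Real.exp (-ρ * t) -
            Real.exp (-ρ * (-Real.log (1 - ρ * h) / (ρ * h)) * (⌊t / h⌋₊ : ℝ) * h)|) ≤
        C * h) := by
  constructor
  · exact fun h hh hh2 => main_aux ρ M hρ hM b hbdd h hh hh2
  · refine ⟨8 * M, 1 / (2 * ρ), by positivity, fun h hh hle => ?_⟩
    have hh2 : h < 1 / ρ := by
      have : 1 / (2 * ρ) < 1 / ρ := by
        rw [div_lt_div_iff₀ (by positivity) hρ]
        linarith
      linarith
    obtain ⟨h1, h2⟩ := main_aux ρ M hρ hM b hbdd h hh hh2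
    refine le_trans h1 (le_trans (le_of_eq h2) ?_)
    set θ : ℝ := -Real.log (1 - ρ * h) / (ρ * h) with hθ
    have hx : 0 < ρ * h := by positivity
    have hx2 : ρ * h ≤ 1 / 2 := by
      have h0 := mul_le_mul_of_nonneg_left hle hρ.le
      rw [show ρ * (1 / (2 * ρ)) = 1 / 2 by field_simp] at h0
      exact h0
    have hpos : (0:ℝ) < 1 - ρ * h := by linarith
    have hθub : θ ≤ (1 - ρ * h)⁻¹ := by
      have hlog2 : 1 - (1 - ρ * h)⁻¹ ≤ Real.log (1 - ρ * h) :=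
        Real.one_sub_inv_le_log_of_pos hpos
      rw [hθ, div_le_iff₀ hx]
      have hinv : (1 - ρ * h)⁻¹ * (1 - ρ * h) = 1 := inv_mul_cancel₀ (ne_of_gt hpos)
      nlinarith
    have hinv2 : (1 - ρ * h)⁻¹ ≤ 2 := by
      rw [inv_le_comm₀ (by linarith) (by norm_num)]
      linarith
    have hθ2 : θ ≤ 2 := le_trans hθub hinv2
    have hθA : θ - 1 ≤ 2 * (ρ * h) := by
      have : (1 - ρ * h)⁻¹ - 1 = (ρ * h) / (1 - ρ * h) := by field_simp; ring
      have h3 : (ρ * h) / (1 - ρ * h) ≤ 2 * (ρ * h) := by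
        rw [div_le_iff₀ hpos]
        nlinarith
      linarith [hθub]
    have hlog : Real.log (1 - ρ * h) ≤ -(ρ * h) := by
      have := Real.log_le_sub_one_of_pos hpos
      linarith
    have hθ1 : 1 ≤ θ := by
      rw [hθ, le_div_iff₀ hx]
      linarith
    have hE : Real.exp (θ * ρ * h) = (1 - ρ * h)⁻¹ := by
      rw [show θ * ρ * h = -Real.log (1 - ρ * h) by
        rw [hθ]; field_simp]
      rw [Real.exp_neg, Real.exp_log hpos]
    rw [hE]
    have hIpos : 0 < (1 - ρ * h)⁻¹ := by positivity
    have hsum : (θ - 1) / ρ + θ * h ≤ 4 * h := by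
      have hA2 : (θ - 1) / ρ ≤ 2 * h := by
        rw [div_le_iff₀ hρ]
        nlinarith
      nlinarith
    have hsum0 : 0 ≤ (θ - 1) / ρ + θ * h := by
      have : 0 ≤ (θ - 1) / ρ := div_nonneg (by linarith) hρ.le
      nlinarith
    calc M * (1 - ρ * h)⁻¹ * ((θ - 1) / ρ + θ * h)
        ≤ M * 2 * (4 * h) := by
          apply mul_le_mul
          · exact mul_le_mul_of_nonneg_left hinv2 hM
          · exact hsum
          · exact hsum0
          · positivity
      _ = 8 * M * h := by ring
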